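/- Let α > 0, β > 0, t > 0, a ∈ ℝ, and x ∈ ℝ with x ≠ 0. Then the change of variables u = 1/(r−t) yields the identity ∫_t^∞ r^{α−1} (r−t)^{−a} · √(r/(r−t)) · exp( −r x²/(2t(r−t)) − β r ) dr = exp( −x²/(2t) − β t ) · ∫_0^∞ (1+tu)^{α−1/2} · u^{a−α−1} · exp( −x² u/2 − β/u ) du, both integrals being finite. -/

import Mathlib

open MeasureTheory Set Real Filter

lemma aux_bdd (p b : ℝ) (hb : 0 < b) :
    ∃ M : ℝ, 0 ≤ M ∧ ∀ v : ℝ, 1 ≤ v → v ^ p * Real.exp (-b * v) ≤ M := by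
  have h := tendsto_rpow_mul_exp_neg_mul_atTop_nhds_zero p b hb
  have h1 : ∀ᶠ v in atTop, v ^ p * Real.exp (-b * v) < 1 :=
    h.eventually (gt_mem_nhds one_pos)
  obtain ⟨N, hN⟩ := h1.exists_forall_of_atTop
  have hcomp : IsCompact (Icc (1:ℝ) N) := isCompact_Icc
  have hcont : ContinuousOn (fun v : ℝ => v ^ p * Real.exp (-b * v)) (Icc 1 N) := by
    apply ContinuousOn.mul
    · exact continuousOn_id.rpow_const fun v hv => Or.inl (ne_of_gt (lt_of_lt_of_le one_pos hv.1))
    · exact (Real.continuous_exp.comp (continuous_const.mul continuous_id)).continuousOn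
  obtain ⟨C, hC⟩ := hcomp.exists_bound_of_continuousOn hcont
  refine ⟨max C 1, le_trans zero_le_one (le_max_right _ _), fun v hv => ?_⟩
  rcases le_total v N with hvN | hvN
  · exact le_trans (le_trans (le_abs_self _) (hC v ⟨hv, hvN⟩)) (le_max_left _ _)
  · exact le_trans (hN v hvN).le (le_max_right _ _)

lemma G_cont (α β t a x : ℝ) (ht : 0 < t) :
    ContinuousOn (fun u : ℝ => (1 + t * u) ^ (α - 1/2) * u ^ (a - α - 1) *
      Real.exp (-(x ^ 2 * u) / 2 - β / u)) (Set.Ioi 0) := by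
  apply ContinuousOn.mul
  apply ContinuousOn.mul
  · exact (continuousOn_const.add (continuousOn_const.mul continuousOn_id)).rpow_const
      fun u hu => Or.inl (by show (1:ℝ) + t * u ≠ 0; exact ne_of_gt (by nlinarith [mem_Ioi.mp hu]))
  · exact continuousOn_id.rpow_const fun u hu => Or.inl (ne_of_gt (mem_Ioi.mp hu))
  · apply Real.continuous_exp.comp_continuousOn
    apply ContinuousOn.sub
    · exact ((continuous_const.mul continuous_id).neg.div_const 2).continuousOn
    · exact continuousOn_const.div continuousOn_id fun u hu => ne_of_gt (mem_Ioi.mp hu)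

lemma G_integrable (α β t a x : ℝ) (hβ : 0 < β) (ht : 0 < t) (hx : x ≠ 0) :
    IntegrableOn (fun u : ℝ => (1 + t * u) ^ (α - 1/2) * u ^ (a - α - 1) *
      Real.exp (-(x ^ 2 * u) / 2 - β / u)) (Set.Ioi 0) := by
  set G : ℝ → ℝ := fun u : ℝ => (1 + t * u) ^ (α - 1/2) * u ^ (a - α - 1) *
      Real.exp (-(x ^ 2 * u) / 2 - β / u) with hG
  obtain ⟨q, hq0, hq1, hq2, hq3⟩ : ∃ q : ℝ, 0 ≤ q ∧ α - 1/2 ≤ q ∧ a - α - 1 ≤ q ∧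
      -q ≤ a - α - 1 := by
    refine ⟨|α - 1/2| + |a - α - 1|, by positivity, ?_, ?_, ?_⟩
    · have := le_abs_self (α - 1/2); have := abs_nonneg (a - α - 1); linarith
    · have := le_abs_self (a - α - 1); have := abs_nonneg (α - 1/2); linarith
    · have := neg_abs_le (a - α - 1); have := abs_nonneg (α - 1/2); linarith
  have hGnn : ∀ u : ℝ, 0 < u → 0 ≤ G u := by
    intro u hu
    have h1 : (0:ℝ) < 1 + t * u := by nlinarith
    rw [hG]
    positivity
  have hcont := G_cont α β t a x ht
  have hsplit : Ioi (0:ℝ) = Ioc 0 1 ∪ Ioi 1 := (Ioc_union_Ioi_eq_Ioi zero_le_one).symm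
  rw [hsplit]
  apply IntegrableOn.union
  · -- on Ioc 0 1
    obtain ⟨M, hM0, hM⟩ := aux_bdd q β hβ
    have hbound : ∀ u ∈ Ioc (0:ℝ) 1, ‖G u‖ ≤ (1 + t) ^ q * M := by
      rintro u ⟨hu0, hu1⟩
      rw [Real.norm_eq_abs, abs_of_nonneg (hGnn u hu0)]
      have h1tu : (0:ℝ) < 1 + t * u := by nlinarith
      have hA : (1 + t * u) ^ (α - 1/2) ≤ (1 + t) ^ q := by
        calc (1 + t * u) ^ (α - 1/2) ≤ (1 + t * u) ^ q :=
              Real.rpow_le_rpow_of_exponent_le (by nlinarith) hq1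
          _ ≤ (1 + t) ^ q := Real.rpow_le_rpow h1tu.le (by nlinarith) hq0
      have hB : u ^ (a - α - 1) ≤ u ^ (-q) :=
        Real.rpow_le_rpow_of_exponent_ge hu0 hu1 hq3
      have hC : Real.exp (-(x ^ 2 * u) / 2 - β / u) ≤ Real.exp (-(β / u)) := by
        apply Real.exp_le_exp.mpr
        have : 0 ≤ x ^ 2 * u / 2 := by positivity
        linarith
      have hD : u ^ (-q) * Real.exp (-(β / u)) ≤ M := by
        have hv : (1:ℝ) ≤ u⁻¹ := (one_le_inv_iff₀).mpr ⟨hu0, hu1⟩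
        have := hM u⁻¹ hv
        rw [Real.inv_rpow hu0.le, ← Real.rpow_neg hu0.le] at this
        rw [show -β * u⁻¹ = -(β / u) by field_simp] at this
        exact this
      have hGn : G u = (1 + t * u) ^ (α - 1/2) * (u ^ (a - α - 1) *
          Real.exp (-(x ^ 2 * u) / 2 - β / u)) := by rw [hG]; ring
      rw [hGn]
      have e1 : u ^ (a - α - 1) * Real.exp (-(x ^ 2 * u) / 2 - β / u)
          ≤ u ^ (-q) * Real.exp (-(β / u)) :=
        mul_le_mul hB hC (Real.exp_pos _).le (Real.rpow_nonneg hu0.le _)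
      calc (1 + t * u) ^ (α - 1/2) * (u ^ (a - α - 1) * Real.exp (-(x ^ 2 * u) / 2 - β / u))
          ≤ (1 + t) ^ q * (u ^ (-q) * Real.exp (-(β / u))) :=
            mul_le_mul hA e1 (by positivity) (by positivity)
        _ ≤ (1 + t) ^ q * M := by
            apply mul_le_mul_of_nonneg_left hD (by positivity)
    apply Integrable.mono' (g := fun _ : ℝ => (1 + t) ^ q * M)
    · exact integrableOn_const measure_Ioc_lt_top.ne
    · exact (hcont.mono Ioc_subset_Ioi_self).aestronglyMeasurable measurableSet_Ioc
    · exact (ae_restrict_iff' measurableSet_Ioc).mpr (Filter.Eventually.of_forall hbound)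
  · -- on Ioi 1
    have hx2 : (0:ℝ) < x ^ 2 / 4 := by positivity
    obtain ⟨M, hM0, hM⟩ := aux_bdd (2 * q) (x ^ 2 / 4) hx2
    have hbound : ∀ u ∈ Ioi (1:ℝ), ‖G u‖ ≤
        (1 + t) ^ q * M * Real.exp (-(x ^ 2 / 4) * u) := by
      intro u hu1
      have hu1 : (1:ℝ) ≤ u := (mem_Ioi.mp hu1).le
      have hu0 : (0:ℝ) < u := lt_of_lt_of_le one_pos hu1
      rw [Real.norm_eq_abs, abs_of_nonneg (hGnn u hu0)]
      have h1tu : (0:ℝ) < 1 + t * u := by nlinarith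
      have hA : (1 + t * u) ^ (α - 1/2) ≤ (1 + t) ^ q * u ^ q := by
        calc (1 + t * u) ^ (α - 1/2) ≤ (1 + t * u) ^ q :=
              Real.rpow_le_rpow_of_exponent_le (by nlinarith) hq1
          _ ≤ ((1 + t) * u) ^ q := Real.rpow_le_rpow h1tu.le (by nlinarith) hq0
          _ = (1 + t) ^ q * u ^ q := Real.mul_rpow (by positivity) hu0.le
      have hB : u ^ (a - α - 1) ≤ u ^ q :=
        Real.rpow_le_rpow_of_exponent_le hu1 hq2
      have hC : Real.exp (-(x ^ 2 * u) / 2 - β / u) ≤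
          Real.exp (-(x ^ 2 / 4) * u) * Real.exp (-(x ^ 2 / 4) * u) := by
        rw [← Real.exp_add]
        apply Real.exp_le_exp.mpr
        have : 0 ≤ β / u := by positivity
        nlinarith
      have key : u ^ q * u ^ q * Real.exp (-(x ^ 2 / 4) * u) ≤ M := by
        have := hM u hu1
        rwa [show (2:ℝ) * q = q + q by ring, Real.rpow_add hu0] at this
      calc G u = (1 + t * u) ^ (α - 1/2) * u ^ (a - α - 1) *
            Real.exp (-(x ^ 2 * u) / 2 - β / u) := by rw [hG]
        _ ≤ ((1 + t) ^ q * u ^ q) * u ^ q *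
            (Real.exp (-(x ^ 2 / 4) * u) * Real.exp (-(x ^ 2 / 4) * u)) := by
            apply mul_le_mul _ hC (Real.exp_pos _).le (by positivity)
            exact mul_le_mul hA hB (Real.rpow_nonneg hu0.le _) (by positivity)
        _ = (1 + t) ^ q * (u ^ q * u ^ q * Real.exp (-(x ^ 2 / 4) * u)) *
            Real.exp (-(x ^ 2 / 4) * u) := by ring
        _ ≤ (1 + t) ^ q * M * Real.exp (-(x ^ 2 / 4) * u) := by
            apply mul_le_mul_of_nonneg_right _ (Real.exp_pos _).le
            exact mul_le_mul_of_nonneg_left key (by positivity)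
    apply Integrable.mono' (g := fun u : ℝ => (1 + t) ^ q * M * Real.exp (-(x ^ 2 / 4) * u))
    · have h0 : IntegrableOn (fun u : ℝ => ((1 + t) ^ q * M) * Real.exp (-(x ^ 2 / 4) * u))
          (Ioi 1) := (exp_neg_integrableOn_Ioi 1 hx2).const_mul _
      exact h0
    · exact (hcont.mono (fun u (hu : u ∈ Ioi (1:ℝ)) => mem_Ioi.mpr (lt_trans one_pos hu))).aestronglyMeasurable measurableSet_Ioi
    · exact (ae_restrict_iff' measurableSet_Ioi).mpr (Filter.Eventually.of_forall hbound)

theorem gamma_prior_substitution_identity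
    (α β t a x : ℝ) (hα : 0 < α) (hβ : 0 < β) (ht : 0 < t) (hx : x ≠ 0) :
    IntegrableOn (fun r : ℝ => r ^ (α - 1) * (r - t) ^ (-a) * Real.sqrt (r / (r - t)) *
      Real.exp (-(r * x ^ 2) / (2 * t * (r - t)) - β * r)) (Set.Ioi t) ∧
    IntegrableOn (fun u : ℝ => (1 + t * u) ^ (α - 1/2) * u ^ (a - α - 1) *
      Real.exp (-(x ^ 2 * u) / 2 - β / u)) (Set.Ioi 0) ∧
    (∫ r in Set.Ioi t, r ^ (α - 1) * (r - t) ^ (-a) * Real.sqrt (r / (r - t)) *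
        Real.exp (-(r * x ^ 2) / (2 * t * (r - t)) - β * r)) =
      Real.exp (-(x ^ 2) / (2 * t) - β * t) *
        (∫ u in Set.Ioi (0:ℝ), (1 + t * u) ^ (α - 1/2) * u ^ (a - α - 1) *
          Real.exp (-(x ^ 2 * u) / 2 - β / u)) := by
  have hG := G_integrable α β t a x hβ ht hx
  set G : ℝ → ℝ := fun u : ℝ => (1 + t * u) ^ (α - 1/2) * u ^ (a - α - 1) *
      Real.exp (-(x ^ 2 * u) / 2 - β / u) with hGdef
  set F : ℝ → ℝ := fun r : ℝ => r ^ (α - 1) * (r - t) ^ (-a) * Real.sqrt (r / (r - t)) *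
      Real.exp (-(r * x ^ 2) / (2 * t * (r - t)) - β * r) with hFdef
  set f : ℝ → ℝ := fun u : ℝ => t + u⁻¹ with hfdef
  set f' : ℝ → ℝ := fun u : ℝ => -(u ^ 2)⁻¹ with hf'def
  have hderiv : ∀ u ∈ Ioi (0:ℝ), HasDerivWithinAt f (f' u) (Ioi 0) u := fun u hu =>
    ((hasDerivAt_inv (ne_of_gt (mem_Ioi.mp hu))).const_add t).hasDerivWithinAt
  have hinj : InjOn f (Ioi 0) := by
    intro u hu v hv h
    have : u⁻¹ = v⁻¹ := by simpa [hfdef] using h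
    exact inv_injective this
  have himg : f '' Ioi 0 = Ioi t := by
    ext r
    constructor
    · rintro ⟨u, hu, rfl⟩
      have : (0:ℝ) < u⁻¹ := inv_pos.mpr (mem_Ioi.mp hu)
      simp only [hfdef, mem_Ioi]
      linarith
    · intro hr
      have hrt : (0:ℝ) < r - t := sub_pos.mpr (mem_Ioi.mp hr)
      refine ⟨(r - t)⁻¹, mem_Ioi.mpr (inv_pos.mpr hrt), ?_⟩
      simp only [hfdef, inv_inv]
      ring
  have hkey : ∀ u ∈ Ioi (0:ℝ), |f' u| • F (f u) =
      Real.exp (-(x ^ 2) / (2 * t) - β * t) * G u := by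
    intro u hu
    have hu0 : (0:ℝ) < u := mem_Ioi.mp hu
    have hui : (0:ℝ) < u⁻¹ := inv_pos.mpr hu0
    have h1tu : (0:ℝ) < 1 + t * u := by nlinarith
    have e0 : f u - t = u⁻¹ := by simp [hfdef]
    have habs : |f' u| = u ^ (-2 : ℝ) := by
      rw [hf'def]
      rw [abs_neg, abs_inv, abs_of_pos (by positivity : (0:ℝ) < u ^ 2)]
      rw [← Real.rpow_natCast u 2, ← Real.rpow_neg hu0.le]
      norm_num
    have eA : (f u) ^ (α - 1) = (1 + t * u) ^ (α - 1) * u ^ (-(α - 1)) := by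
      have : f u = (1 + t * u) / u := by
        simp only [hfdef]; field_simp; ring
      rw [this, Real.div_rpow h1tu.le hu0.le, Real.rpow_neg hu0.le, div_eq_mul_inv]
    have eB : (f u - t) ^ (-a) = u ^ a := by
      rw [e0, ← Real.rpow_neg_one u, ← Real.rpow_mul hu0.le]
      norm_num
    have eC : Real.sqrt (f u / (f u - t)) = (1 + t * u) ^ ((1:ℝ)/2) := by
      rw [e0]
      have : f u / u⁻¹ = 1 + t * u := by
        simp only [hfdef]; field_simp; ring
      rw [this, Real.sqrt_eq_rpow]
    have eD : -(f u * x ^ 2) / (2 * t * (f u - t)) - β * f u =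
        (-(x ^ 2) / (2 * t) - β * t) + (-(x ^ 2 * u) / 2 - β / u) := by
      rw [e0]
      simp only [hfdef]
      field_simp
      ring
    simp only [smul_eq_mul, hFdef, hGdef]
    rw [habs, eA, eB, eC, eD, Real.exp_add]
    have h1 : (1 + t * u) ^ (α - 1) * (1 + t * u) ^ ((1:ℝ)/2) = (1 + t * u) ^ (α - 1/2) := by
      rw [← Real.rpow_add h1tu]; congr 1; ring
    have h2 : u ^ (-2 : ℝ) * (u ^ (-(α - 1)) * u ^ a) = u ^ (a - α - 1) := by
      rw [← Real.rpow_add hu0, ← Real.rpow_add hu0]; congr 1; ring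
    calc u ^ (-2:ℝ) * ((1 + t * u) ^ (α - 1) * u ^ (-(α - 1)) * u ^ a *
          (1 + t * u) ^ ((1:ℝ)/2) *
          (Real.exp (-(x ^ 2) / (2 * t) - β * t) * Real.exp (-(x ^ 2 * u) / 2 - β / u)))
        = Real.exp (-(x ^ 2) / (2 * t) - β * t) *
          (((1 + t * u) ^ (α - 1) * (1 + t * u) ^ ((1:ℝ)/2)) *
          (u ^ (-2:ℝ) * (u ^ (-(α - 1)) * u ^ a)) *
          Real.exp (-(x ^ 2 * u) / 2 - β / u)) := by ring
      _ = _ := by rw [h1, h2]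
  have hiff := integrableOn_image_iff_integrableOn_abs_deriv_smul measurableSet_Ioi hderiv hinj F
  rw [himg] at hiff
  have hCG : IntegrableOn (fun u => Real.exp (-(x ^ 2) / (2 * t) - β * t) * G u) (Ioi 0) :=
    hG.const_mul _
  have hF : IntegrableOn F (Ioi t) :=
    hiff.mpr (hCG.congr_fun (fun u hu => (hkey u hu).symm) measurableSet_Ioi)
  refine ⟨hF, hG, ?_⟩
  have heq := integral_image_eq_integral_abs_deriv_smul measurableSet_Ioi hderiv hinj F
  rw [himg] at heq
  rw [heq, setIntegral_congr_fun measurableSet_Ioi hkey, MeasureTheory.integral_const_mul]
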